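/- Let G be a graph with a fixed orientation of its edges, let T be a triangle (closed walk of length three) in G, and let f : V(G) → L. If f is continuous, then |∫_T df| ≤ 1; if moreover T is f-contractible, then ∫_T df = 0. -/
import Mathlib


/-- A graph together with a fixed orientation of its edges: each edge `e` has a
tail `e⁻` and a head `e⁺`. -/
structure OGraph : Type 1 where
  V : Type
  E : Type
  tail : E → V
  head : E → V

/-- The set of labels `L = {−1, 0, 1, ⋆}`. -/
inductive L : Type
  | neg | zero | pos | star
deriving DecidableEq

/-- The integer value of a label (with junk value `0` at `⋆`). -/
def L.toInt : L → ℤ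
  | .neg => -1
  | .zero => 0
  | .pos => 1
  | .star => 0

/-- Two vertices are adjacent if some edge has them as its two endpoints. -/
def OGraph.Adj (G : OGraph) (u v : G.V) : Prop :=
  ∃ e : G.E, (G.tail e = u ∧ G.head e = v) ∨ (G.tail e = v ∧ G.head e = u)

/-- `f` is continuous on `S`: no edge of `G` between vertices of `S` joins the
values `−1` and `1`. -/
def OContinuousOn (G : OGraph) (f : G.V → L) (S : Set G.V) : Prop :=
  ∀ u v : G.V, u ∈ S → v ∈ S → G.Adj u v → ¬(f u = L.neg ∧ f v = L.pos)

/-- `f` is holomorphic on `S`: it is continuous on `S` and moreover no edge of `G`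
between vertices of `S` joins the values `0` and `⋆`. -/
def OHolomorphicOn (G : OGraph) (f : G.V → L) (S : Set G.V) : Prop :=
  OContinuousOn G f S ∧
  ∀ u v : G.V, u ∈ S → v ∈ S → G.Adj u v → ¬(f u = L.zero ∧ f v = L.star)

/-- `f` is entire on `S`: it is continuous on `S` and takes no value `⋆` on `S`. -/
def OEntireOn (G : OGraph) (f : G.V → L) (S : Set G.V) : Prop :=
  OContinuousOn G f S ∧ ∀ v ∈ S, f v ≠ L.star

/-- The derivative `df : E(G) → ℤ`: `df(e) = f(e⁺) − f(e⁻)` if neither endpoint has value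
`⋆`, and `df(e) = 0` otherwise. -/
def dF (G : OGraph) (f : G.V → L) (e : G.E) : ℤ :=
  if f (G.tail e) = L.star ∨ f (G.head e) = L.star then 0
  else (f (G.head e)).toInt - (f (G.tail e)).toInt

/-- A walk `(v₀, e₁, v₁, …, e_n, v_n)` in `G`, not necessarily respecting the
orientation: each edge `e_i` joins `v_{i−1}` and `v_i` (in one of the two directions). -/
structure OWalk (G : OGraph) where
  n : ℕ
  v : Fin (n + 1) → G.V
  e : Fin n → G.E
  valid : ∀ i : Fin n,
    (G.tail (e i) = v i.castSucc ∧ G.head (e i) = v i.succ) ∨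
    (G.head (e i) = v i.castSucc ∧ G.tail (e i) = v i.succ)

open scoped Classical in
/-- `I_W = Σ_i ε_i`, where `ε_i(e_i) = +1` if `v_i = e_i⁺`, `ε_i(e_i) = −1` if
`v_i = e_i⁻`, and `ε_i(e) = 0` for `e ≠ e_i`. -/
noncomputable def OWalk.I {G : OGraph} (W : OWalk G) (e' : G.E) : ℤ :=
  ∑ i : Fin W.n,
    if W.e i = e' then (if G.head (W.e i) = W.v i.succ then 1 else -1) else 0

/-- `∫_W h = Σ_{e ∈ E(G)} I_W(e) · h(e)`. -/
noncomputable def intW {G : OGraph} [Fintype G.E] (W : OWalk G) (h : G.E → ℤ) : ℤ :=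
  ∑ e : G.E, W.I e * h e

section Aux

/-- The "step" between two labels. -/
def step (a b : L) : ℤ :=
  if a = L.star ∨ b = L.star then 0 else b.toInt - a.toInt

lemma step_ant (a b : L) : step a b = -step b a := by
  cases a <;> cases b <;> decide

lemma dF_eq_step (G : OGraph) (f : G.V → L) (e : G.E) :
    dF G f e = step (f (G.tail e)) (f (G.head e)) := rfl

lemma key1 (a b c : L)
    (h1 : ¬(a = L.neg ∧ b = L.pos)) (h2 : ¬(b = L.neg ∧ a = L.pos))
    (h3 : ¬(b = L.neg ∧ c = L.pos)) (h4 : ¬(c = L.neg ∧ b = L.pos))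
    (h5 : ¬(c = L.neg ∧ a = L.pos)) (h6 : ¬(a = L.neg ∧ c = L.pos)) :
    |step a b + step b c + step c a| ≤ 1 := by
  cases a <;> cases b <;> cases c <;> first | decide | simp_all

lemma key2 (a b c : L)
    (h1 : ¬(a = L.neg ∧ b = L.pos)) (h2 : ¬(b = L.neg ∧ a = L.pos))
    (h3 : ¬(b = L.neg ∧ c = L.pos)) (h4 : ¬(c = L.neg ∧ b = L.pos))
    (h5 : ¬(c = L.neg ∧ a = L.pos)) (h6 : ¬(a = L.neg ∧ c = L.pos))
    (g1 : ¬(a = L.zero ∧ b = L.star)) (g2 : ¬(b = L.zero ∧ a = L.star))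
    (g3 : ¬(b = L.zero ∧ c = L.star)) (g4 : ¬(c = L.zero ∧ b = L.star))
    (g5 : ¬(c = L.zero ∧ a = L.star)) (g6 : ¬(a = L.zero ∧ c = L.star)) :
    step a b + step b c + step c a = 0 := by
  cases a <;> cases b <;> cases c <;> first | decide | simp_all

lemma adj_walk {G : OGraph} (W : OWalk G) (i : Fin W.n) :
    G.Adj (W.v i.castSucc) (W.v i.succ) :=
  ⟨W.e i, (W.valid i).imp id And.symm⟩

lemma adj_symm {G : OGraph} {u v : G.V} (h : G.Adj u v) : G.Adj v u := by
  obtain ⟨e, he⟩ := h; exact ⟨e, he.symm⟩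

open scoped Classical in
lemma intW_eq (G : OGraph) [Fintype G.E] (W : OWalk G) (h : G.E → ℤ) :
    intW W h = ∑ i : Fin W.n,
      (if G.head (W.e i) = W.v i.succ then (1:ℤ) else -1) * h (W.e i) := by
  unfold intW OWalk.I
  simp_rw [Finset.sum_mul]
  rw [Finset.sum_comm]
  refine Finset.sum_congr rfl fun i _ => ?_
  simp_rw [ite_mul, zero_mul]
  rw [Finset.sum_ite_eq]
  simp

open scoped Classical in
lemma edge_contrib (G : OGraph) (f : G.V → L) (W : OWalk G) (i : Fin W.n) :
    (if G.head (W.e i) = W.v i.succ then (1:ℤ) else -1) * dF G f (W.e i)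
      = step (f (W.v i.castSucc)) (f (W.v i.succ)) := by
  rcases W.valid i with ⟨ht, hh⟩ | ⟨hh, ht⟩
  · rw [if_pos hh, one_mul, dF_eq_step, ht, hh]
  · by_cases h : G.head (W.e i) = W.v i.succ
    · have hvv : W.v i.castSucc = W.v i.succ := hh.symm.trans h
      rw [if_pos h, one_mul, dF_eq_step, ht, hh, hvv]
    · rw [if_neg h, dF_eq_step, ht, hh, step_ant]; ring

end Aux

/-- Let `T` be a triangle (a closed walk of length three) in `G` and let `f` be
continuous.  Then `|∫_T df| ≤ 1`, and if moreover `T` is `f`-contractible (i.e. `f` is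
holomorphic on the vertices of `T`), then `∫_T df = 0`. -/
theorem stmt_5 (G : OGraph) [Fintype G.E] (T : OWalk G)
    (hT3 : T.n = 3) (hclosed : T.v (Fin.last T.n) = T.v 0)
    (f : G.V → L) (hcont : OContinuousOn G f Set.univ) :
    |intW T (dF G f)| ≤ 1 ∧
    (OHolomorphicOn G f (Set.range T.v) → intW T (dF G f) = 0) := by
  obtain ⟨n, v, e, valid⟩ := T
  dsimp only at hT3 hclosed ⊢
  subst hT3
  have hS : intW ⟨3, v, e, valid⟩ (dF G f)
      = step (f (v 0)) (f (v 1)) + step (f (v 1)) (f (v 2)) + step (f (v 2)) (f (v 0)) := by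
    rw [intW_eq, Finset.sum_congr rfl fun i _ => edge_contrib G f ⟨3, v, e, valid⟩ i,
      Fin.sum_univ_three]
    rw [show ((0:Fin 3).castSucc) = (0:Fin 4) from rfl,
      show ((0:Fin 3).succ) = (1:Fin 4) from rfl,
      show ((1:Fin 3).castSucc) = (1:Fin 4) from rfl,
      show ((1:Fin 3).succ) = (2:Fin 4) from rfl,
      show ((2:Fin 3).castSucc) = (2:Fin 4) from rfl,
      show ((2:Fin 3).succ) = Fin.last 3 from rfl]
    dsimp only
    rw [hclosed]
  have adj01 : G.Adj (v 0) (v 1) := by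
    have := adj_walk ⟨3, v, e, valid⟩ (0 : Fin 3)
    simpa using this
  have adj12 : G.Adj (v 1) (v 2) := by
    have := adj_walk ⟨3, v, e, valid⟩ (1 : Fin 3)
    simpa using this
  have adj20 : G.Adj (v 2) (v 0) := by
    have h := adj_walk ⟨3, v, e, valid⟩ (2 : Fin 3)
    have h3 : v (Fin.last 3) = v 0 := hclosed
    simp only [show ((2 : Fin 3).castSucc) = (2 : Fin 4) from rfl,
      show ((2 : Fin 3).succ) = (3 : Fin 4) from rfl] at h
    rw [show (3 : Fin 4) = Fin.last 3 from rfl, h3] at h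
    exact h
  constructor
  · rw [hS]
    exact key1 _ _ _
      (hcont _ _ trivial trivial adj01) (hcont _ _ trivial trivial (adj_symm adj01))
      (hcont _ _ trivial trivial adj12) (hcont _ _ trivial trivial (adj_symm adj12))
      (hcont _ _ trivial trivial adj20) (hcont _ _ trivial trivial (adj_symm adj20))
  · rintro ⟨hc, hh⟩
    rw [hS]
    have m0 : v 0 ∈ Set.range v := ⟨0, rfl⟩
    have m1 : v 1 ∈ Set.range v := ⟨1, rfl⟩
    have m2 : v 2 ∈ Set.range v := ⟨2, rfl⟩
    exact key2 _ _ _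
      (hc _ _ m0 m1 adj01) (hc _ _ m1 m0 (adj_symm adj01))
      (hc _ _ m1 m2 adj12) (hc _ _ m2 m1 (adj_symm adj12))
      (hc _ _ m2 m0 adj20) (hc _ _ m0 m2 (adj_symm adj20))
      (hh _ _ m0 m1 adj01) (hh _ _ m1 m0 (adj_symm adj01))
      (hh _ _ m1 m2 adj12) (hh _ _ m2 m1 (adj_symm adj12))
      (hh _ _ m2 m0 adj20) (hh _ _ m0 m2 (adj_symm adj20))
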